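/- If a branching conjunction ⋀({(α)φ'} ∪ Ψ) of HML_srbb distinguishes a process p from a set Q (with respect to ⟦·⟧^ε), then for any p' with p →(α) p' and p' ∈ ⟦φ'⟧, taking Q_α = {q ∈ Q | q ∉ ⟦(α)φ'⟧^∧}, we have expr^ε(⋀({(α)φ'} ∪ Ψ)) ∈ Win_a((p,α,p',Q∖Q_α,Q_α)^η_d) in the weak spectroscopy energy game G△. -/

import Mathlib

open Classical

noncomputable section

namespace Spectroscopy

/-! ### Energies and declining energy games -/

/-- Energies: 8-dimensional vectors over `ℕ ∪ {∞}`, ordered componentwise. -/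
abbrev Energy : Type := Fin 8 → ℕ∞

/-- The `i`-th unit vector. -/
def unitE (i : Fin 8) : Energy := fun k => if k = i then 1 else 0

/-- The vector with value `v` at position `i` and `0` elsewhere. -/
def onlyAt (i : Fin 8) (v : ℕ∞) : Energy := fun k => if k = i then v else 0

/-- Components of energy updates: `-1`, `0`, or minimum selection `min_D`.
For the component at position `k`, `minWith D` selects the minimum over the
positions `{k} ∪ D`, so the requirement `k ∈ D` of the paper holds by
construction. -/
inductive UpdComp : Type
  | decr : UpdComp
  | zero : UpdComp
  | minWith (D : Finset (Fin 8)) : UpdComp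
deriving DecidableEq

/-- Energy updates. -/
abbrev Update : Type := Fin 8 → UpdComp

/-- Partial application of an update to an energy (`none` when a component
would become negative). -/
def upd (e : Energy) (u : Update) : Option Energy :=
  if ∀ k, u k = UpdComp.decr → e k ≠ 0 then
    some (fun k =>
      match u k with
      | UpdComp.decr => e k - 1
      | UpdComp.zero => e k
      | UpdComp.minWith D => (insert k D).inf e)
  else none

/-- A declining energy game: positions, a defender predicate (attacker
positions are the non-defender ones), and moves labeled with updates. -/
structure EGame (Pos : Type) where
  defender : Pos → Prop
  move : Pos → Update → Pos → Prop

/-- Attacker winning budgets `Win_a`: at an attacker position some move must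
lead to an attacker-won position under the updated energy; at a defender
position every move must (be defined and) lead to an attacker-won position. -/
inductive EGame.Win {Pos : Type} (G : EGame Pos) : Pos → Energy → Prop
  | attack {g : Pos} {u : Update} {g' : Pos} {e e' : Energy} :
      ¬ G.defender g → G.move g u g' → upd e u = some e' → G.Win g' e' →
      G.Win g e
  | defend {g : Pos} {e : Energy} :
      G.defender g →
      (∀ u g', G.move g u g' → upd e u ≠ none) →
      (∀ u g' e', G.move g u g' → upd e u = some e' → G.Win g' e') →
      G.Win g e

/-! ### Labeled transition systems with silent steps -/

section LTS

variable {Proc Act : Type}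

/-- Weak internal steps `↠`: reflexive-transitive closure of `τ`-steps. -/
def Star (Tr : Proc → Act → Proc → Prop) (τ : Act) : Proc → Proc → Prop :=
  Relation.ReflTransGen fun p p' => Tr p τ p'

/-- A process is stable if it has no `τ`-step. -/
def Stable (Tr : Proc → Act → Proc → Prop) (τ : Act) (p : Proc) : Prop :=
  ∀ p', ¬ Tr p τ p'

/-- Optional step `p →(α) p'`: a real `α`-step, or `α = τ` and `p = p'`. -/
def OptStep (Tr : Proc → Act → Proc → Prop) (τ : Act) (p : Proc) (α : Act) (p' : Proc) : Prop :=
  Tr p α p' ∨ (α = τ ∧ p = p')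

/-- Lift of `→a` to sets. -/
def SetStep (Tr : Proc → Act → Proc → Prop) (Q : Set Proc) (a : Act) (Q' : Set Proc) : Prop :=
  Q' = {q' | ∃ q ∈ Q, Tr q a q'}

/-- Lift of `↠` to sets. -/
def SetStar (Tr : Proc → Act → Proc → Prop) (τ : Act) (Q Q' : Set Proc) : Prop :=
  Q' = {q' | ∃ q ∈ Q, Star Tr τ q q'}

/-- Lift of `→(α)` to sets. -/
def SetOpt (Tr : Proc → Act → Proc → Prop) (τ : Act) (Q : Set Proc) (α : Act)
    (Q' : Set Proc) : Prop :=
  Q' = {q' | ∃ q ∈ Q, OptStep Tr τ q α q'}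

end LTS

/-! ### The logic HML_srbb -/

mutual
/-- Formulas `φ` of HML_srbb: `⟨ε⟩χ` or immediate conjunctions `⋀Ψ`
(conjunctions are indexed by an arbitrary type). `⊤` is the empty conjunction. -/
inductive Formula (Act : Type) (τ : Act) : Type 1
  | delayed : DFormula Act τ → Formula Act τ
  | conj : (I : Type) → (I → Conjunct Act τ) → Formula Act τ

/-- Delayed formulas `χ`: observations `⟨a⟩φ` (with `a ≠ τ`), standard
conjunctions `⋀Ψ`, stable conjunctions `⋀({¬⟨τ⟩⊤} ∪ Ψ)`, and branching
conjunctions `⋀({(α)φ} ∪ Ψ)`. -/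
inductive DFormula (Act : Type) (τ : Act) : Type 1
  | obs : (a : Act) → a ≠ τ → Formula Act τ → DFormula Act τ
  | conj : (I : Type) → (I → Conjunct Act τ) → DFormula Act τ
  | stableConj : (I : Type) → (I → Conjunct Act τ) → DFormula Act τ
  | branchConj : (α : Act) → Formula Act τ → (I : Type) → (I → Conjunct Act τ) → DFormula Act τ

/-- Conjuncts `ψ`: positive `⟨ε⟩χ` or negative `¬⟨ε⟩χ`. -/
inductive Conjunct (Act : Type) (τ : Act) : Type 1
  | pos : DFormula Act τ → Conjunct Act τ
  | neg : DFormula Act τ → Conjunct Act τ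
end

section Semantics

variable {Proc Act : Type}

mutual
/-- Semantics `⟦φ⟧`. -/
def Sat (Tr : Proc → Act → Proc → Prop) (τ : Act) (p : Proc) : Formula Act τ → Prop
  | .delayed χ => ∃ p', Star Tr τ p p' ∧ SatD Tr τ p' χ
  | .conj _ ps => ∀ i, SatC Tr τ p (ps i)

/-- Semantics `⟦χ⟧^ε` of delayed formulas. -/
def SatD (Tr : Proc → Act → Proc → Prop) (τ : Act) (p : Proc) : DFormula Act τ → Prop
  | .obs a _ φ => ∃ p', Tr p a p' ∧ Sat Tr τ p' φ
  | .conj _ ps => ∀ i, SatC Tr τ p (ps i)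
  | .stableConj _ ps => Stable Tr τ p ∧ ∀ i, SatC Tr τ p (ps i)
  | .branchConj α φ _ ps =>
      (∃ p', OptStep Tr τ p α p' ∧ Sat Tr τ p' φ) ∧ ∀ i, SatC Tr τ p (ps i)

/-- Semantics `⟦ψ⟧^∧` of conjuncts. -/
def SatC (Tr : Proc → Act → Proc → Prop) (τ : Act) (p : Proc) : Conjunct Act τ → Prop
  | .pos χ => ∃ p', Star Tr τ p p' ∧ SatD Tr τ p' χ
  | .neg χ => ¬ ∃ p', Star Tr τ p p' ∧ SatD Tr τ p' χ
end

/-- `φ` distinguishes `p` from the set `Q`. -/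
def Distinguishes (Tr : Proc → Act → Proc → Prop) (τ : Act) (φ : Formula Act τ)
    (p : Proc) (Q : Set Proc) : Prop :=
  Sat Tr τ p φ ∧ ∀ q ∈ Q, ¬ Sat Tr τ q φ

/-- The delayed formula `χ` distinguishes `p` from the set `Q` w.r.t. `⟦·⟧^ε`. -/
def DistinguishesD (Tr : Proc → Act → Proc → Prop) (τ : Act) (χ : DFormula Act τ)
    (p : Proc) (Q : Set Proc) : Prop :=
  SatD Tr τ p χ ∧ ∀ q ∈ Q, ¬ SatD Tr τ q χ

/-- The conjunct `ψ` distinguishes `p` from `q` w.r.t. `⟦·⟧^∧`. -/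
def DistinguishesC (Tr : Proc → Act → Proc → Prop) (τ : Act) (ψ : Conjunct Act τ)
    (p q : Proc) : Prop :=
  SatC Tr τ p ψ ∧ ¬ SatC Tr τ q ψ

/-- Stability-respecting branching bisimulations: symmetric relations with the
branching-bisimulation transfer property and the stability-respecting
property. -/
def IsSRBBisim (Tr : Proc → Act → Proc → Prop) (τ : Act) (R : Proc → Proc → Prop) : Prop :=
  Symmetric R ∧
  (∀ p q, R p q → ∀ α p', Tr p α p' →
    (α = τ ∧ R p' q) ∨
      ∃ q' q'', Star Tr τ q q' ∧ Tr q' α q'' ∧ R p q' ∧ R p' q'') ∧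
  (∀ p q, R p q → Stable Tr τ p →
    ∃ q', Star Tr τ q q' ∧ Stable Tr τ q' ∧ R p q')

end Semantics

/-! ### Expressiveness prices -/

section Expr

variable {Act : Type} {τ : Act}

mutual
/-- Expressiveness price `expr` of formulas. -/
def exprF : Formula Act τ → Energy
  | .delayed χ => exprE χ
  | .conj I ps => ⨆ _ : Nonempty I, ((unitE 4 + unitE 2) + ⨆ i, exprC (ps i))

/-- Expressiveness price `expr^ε` of delayed formulas. -/
def exprE : DFormula Act τ → Energy
  | .obs _ _ φ => unitE 0 + exprF φ
  | .conj I ps => ⨆ _ : Nonempty I, (unitE 2 + ⨆ i, exprC (ps i))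
  | .stableConj _ ps => unitE 3 + ⨆ i, exprC (ps i)
  | .branchConj _ φ _ ps =>
      (unitE 1 + unitE 2) +
        (((unitE 0 + exprF φ) ⊔ onlyAt 5 (1 + exprF φ 0)) ⊔ ⨆ i, exprC (ps i))

/-- Expressiveness price `expr^∧` of conjuncts. -/
def exprC : Conjunct Act τ → Energy
  | .pos χ => exprE χ ⊔ onlyAt 5 (exprE χ 0)
  | .neg χ => (unitE 7 + exprE χ) ⊔ onlyAt 6 (exprE χ 0)
end

end Expr

/-! ### The weak spectroscopy energy game -/

/-- Positions of the weak spectroscopy game. -/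
inductive GPos (Proc Act : Type) : Type
  | att (p : Proc) (Q : Set Proc)                                 -- `[p,Q]_a`
  | attD (p : Proc) (Q : Set Proc)                                -- `[p,Q]^ε_a`
  | attC (p q : Proc)                                             -- `[p,q]^∧_a`
  | attB (p : Proc) (Q : Set Proc)                                -- `[p,Q]^η_a`
  | defC (p : Proc) (Q : Set Proc)                                -- `(p,Q)_d`
  | defS (p : Proc) (Q : Set Proc)                                -- `(p,Q)^s_d`
  | defB (p : Proc) (α : Act) (p' : Proc) (Q Qa : Set Proc)       -- `(p,α,p',Q,Qa)^η_d`

/-- The zero update. -/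
def zeroU : Update := fun _ => UpdComp.zero

/-- The update `-ê_i`. -/
def decU (i : Fin 8) : Update := fun k => if k = i then UpdComp.decr else UpdComp.zero

/-- The update `(min_{1,6},0,0,0,0,0,0,0)`. -/
def minU16 : Update := fun k => if k = 0 then UpdComp.minWith {5} else UpdComp.zero

/-- The update `(min_{1,7},0,0,0,0,0,0,-1)`. -/
def minU17dec8 : Update := fun k =>
  if k = 0 then UpdComp.minWith {6} else if k = 7 then UpdComp.decr else UpdComp.zero

/-- The update `(0,-1,-1,0,0,0,0,0)`. -/
def dec23 : Update := fun k => if k = 1 ∨ k = 2 then UpdComp.decr else UpdComp.zero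

/-- The update `(min_{1,6},-1,-1,0,0,0,0,0)`. -/
def minU16dec23 : Update := fun k =>
  if k = 0 then UpdComp.minWith {5}
  else if k = 1 ∨ k = 2 then UpdComp.decr else UpdComp.zero

section Game

variable {Proc Act : Type}

/-- Moves of the weak spectroscopy game. -/
inductive GMove (Tr : Proc → Act → Proc → Prop) (τ : Act) :
    GPos Proc Act → Update → GPos Proc Act → Prop
  | delay {p : Proc} {Q Q' : Set Proc} :
      SetStar Tr τ Q Q' →
      GMove Tr τ (.att p Q) zeroU (.attD p Q')
  | procrastination {p p' : Proc} {Q : Set Proc} :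
      Tr p τ p' → p ≠ p' →
      GMove Tr τ (.attD p Q) zeroU (.attD p' Q)
  | observation {p p' : Proc} {a : Act} {Q Q' : Set Proc} :
      Tr p a p' → a ≠ τ → SetStep Tr Q a Q' →
      GMove Tr τ (.attD p Q) (decU 0) (.att p' Q')
  | finishing {p : Proc} :
      GMove Tr τ (.att p ∅) zeroU (.defC p ∅)
  | immediateConj {p : Proc} {Q : Set Proc} :
      Q ≠ ∅ →
      GMove Tr τ (.att p Q) (decU 4) (.defC p Q)
  | lateConj {p : Proc} {Q : Set Proc} :
      GMove Tr τ (.attD p Q) zeroU (.defC p Q)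
  | conjAnswer {p q : Proc} {Q : Set Proc} :
      q ∈ Q →
      GMove Tr τ (.defC p Q) (decU 2) (.attC p q)
  | posConjunct {p q : Proc} {Q : Set Proc} :
      SetStar Tr τ {q} Q →
      GMove Tr τ (.attC p q) minU16 (.attD p Q)
  | negConjunct {p q : Proc} {Q : Set Proc} :
      SetStar Tr τ {p} Q → p ≠ q →
      GMove Tr τ (.attC p q) minU17dec8 (.attD q Q)
  | stableConj {p : Proc} {Q : Set Proc} :
      Stable Tr τ p →
      GMove Tr τ (.attD p Q) zeroU (.defS p {q ∈ Q | Stable Tr τ q})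
  | conjStableAnswer {p q : Proc} {Q : Set Proc} :
      q ∈ Q →
      GMove Tr τ (.defS p Q) (decU 3) (.attC p q)
  | stableFinishing {p : Proc} :
      GMove Tr τ (.defS p ∅) (decU 3) (.defC p ∅)
  | branchConj {p p' : Proc} {α : Act} {Q Qa : Set Proc} :
      OptStep Tr τ p α p' → Qa ⊆ Q →
      GMove Tr τ (.attD p Q) zeroU (.defB p α p' (Q \ Qa) Qa)
  | branchAnswer {p p' q : Proc} {α : Act} {Q Qa : Set Proc} :
      q ∈ Q →
      GMove Tr τ (.defB p α p' Q Qa) dec23 (.attC p q)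
  | branchObservation {p p' : Proc} {α : Act} {Q Qa Q' : Set Proc} :
      SetOpt Tr τ Qa α Q' →
      GMove Tr τ (.defB p α p' Q Qa) minU16dec23 (.attB p' Q')
  | branchAccounting {p : Proc} {Q : Set Proc} :
      GMove Tr τ (.attB p Q) (decU 0) (.att p Q)

/-- Defender positions of the weak spectroscopy game. -/
def isDefender : GPos Proc Act → Prop
  | .defC _ _ => True
  | .defS _ _ => True
  | .defB _ _ _ _ _ => True
  | _ => False

/-- The weak spectroscopy energy game `G△`. -/
def specGame (Tr : Proc → Act → Proc → Prop) (τ : Act) : EGame (GPos Proc Act) where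
  defender := isDefender
  move := GMove Tr τ

end Game

/-! ### Strategy formulas -/

section Strat

variable {Proc Act : Type}

mutual
/-- Attacker strategy formulas (formula sort). -/
inductive StratF (Tr : Proc → Act → Proc → Prop) (τ : Act) :
    GPos Proc Act → Energy → Formula Act τ → Prop
  | delay {p : Proc} {Q Q' : Set Proc} {u : Update} {e e' : Energy} {χ : DFormula Act τ} :
      GMove Tr τ (.att p Q) u (.attD p Q') →
      upd e u = some e' →
      (specGame Tr τ).Win (.attD p Q') e' →
      StratD Tr τ (.attD p Q') e' χ →
      StratF Tr τ (.att p Q) e (.delayed χ)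
  | immediateConj {p : Proc} {Q : Set Proc} {u : Update} {e e' : Energy}
      {I : Type} {ps : I → Conjunct Act τ} :
      GMove Tr τ (.att p Q) u (.defC p Q) →
      upd e u = some e' →
      (specGame Tr τ).Win (.defC p Q) e' →
      StratD Tr τ (.defC p Q) e' (.conj I ps) →
      StratF Tr τ (.att p Q) e (.conj I ps)

/-- Attacker strategy formulas (delayed-formula sort). -/
inductive StratD (Tr : Proc → Act → Proc → Prop) (τ : Act) :
    GPos Proc Act → Energy → DFormula Act τ → Prop
  | procrastination {p p' : Proc} {Q : Set Proc} {u : Update} {e e' : Energy}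
      {χ : DFormula Act τ} :
      GMove Tr τ (.attD p Q) u (.attD p' Q) →
      upd e u = some e' →
      (specGame Tr τ).Win (.attD p' Q) e' →
      StratD Tr τ (.attD p' Q) e' χ →
      StratD Tr τ (.attD p Q) e χ
  | observation {p p' : Proc} {a : Act} {Q Q' : Set Proc} {u : Update} {e e' : Energy}
      {φ : Formula Act τ} (ha : a ≠ τ) :
      GMove Tr τ (.attD p Q) u (.att p' Q') →
      Tr p a p' → SetStep Tr Q a Q' →
      upd e u = some e' →
      (specGame Tr τ).Win (.att p' Q') e' →
      StratF Tr τ (.att p' Q') e' φ →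
      StratD Tr τ (.attD p Q) e (.obs a ha φ)
  | lateConj {p : Proc} {Q : Set Proc} {u : Update} {e e' : Energy} {χ : DFormula Act τ} :
      GMove Tr τ (.attD p Q) u (.defC p Q) →
      upd e u = some e' →
      (specGame Tr τ).Win (.defC p Q) e' →
      StratD Tr τ (.defC p Q) e' χ →
      StratD Tr τ (.attD p Q) e χ
  | stable {p : Proc} {Q Q' : Set Proc} {u : Update} {e e' : Energy} {χ : DFormula Act τ} :
      GMove Tr τ (.attD p Q) u (.defS p Q') →
      upd e u = some e' →
      (specGame Tr τ).Win (.defS p Q') e' →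
      StratD Tr τ (.defS p Q') e' χ →
      StratD Tr τ (.attD p Q) e χ
  | branch {p p' : Proc} {α : Act} {Q Q' Qa : Set Proc} {u : Update} {e e' : Energy}
      {χ : DFormula Act τ} :
      GMove Tr τ (.attD p Q) u (.defB p α p' Q' Qa) →
      upd e u = some e' →
      (specGame Tr τ).Win (.defB p α p' Q' Qa) e' →
      StratD Tr τ (.defB p α p' Q' Qa) e' χ →
      StratD Tr τ (.attD p Q) e χ
  | conj {p : Proc} {Q : Set Proc} {e : Energy}
      (us : {q // q ∈ Q} → Update) (es : {q // q ∈ Q} → Energy)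
      (ψs : {q // q ∈ Q} → Conjunct Act τ) :
      (∀ qq : {q // q ∈ Q}, GMove Tr τ (.defC p Q) (us qq) (.attC p qq.1)) →
      (∀ qq : {q // q ∈ Q}, upd e (us qq) = some (es qq)) →
      (∀ qq : {q // q ∈ Q}, (specGame Tr τ).Win (.attC p qq.1) (es qq)) →
      (∀ qq : {q // q ∈ Q}, StratC Tr τ (.attC p qq.1) (es qq) (ψs qq)) →
      StratD Tr τ (.defC p Q) e (.conj {q // q ∈ Q} ψs)
  | stableConj {p : Proc} {Q : Set Proc} {e : Energy}
      (hne : Q.Nonempty)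
      (us : {q // q ∈ Q} → Update) (es : {q // q ∈ Q} → Energy)
      (ψs : {q // q ∈ Q} → Conjunct Act τ) :
      (∀ qq : {q // q ∈ Q}, GMove Tr τ (.defS p Q) (us qq) (.attC p qq.1)) →
      (∀ qq : {q // q ∈ Q}, upd e (us qq) = some (es qq)) →
      (∀ qq : {q // q ∈ Q}, (specGame Tr τ).Win (.attC p qq.1) (es qq)) →
      (∀ qq : {q // q ∈ Q}, StratC Tr τ (.attC p qq.1) (es qq) (ψs qq)) →
      StratD Tr τ (.defS p Q) e (.stableConj {q // q ∈ Q} ψs)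
  | stableFinish {p : Proc} {u : Update} {e e' : Energy} :
      GMove Tr τ (.defS p ∅) u (.defC p ∅) →
      upd e u = some e' →
      (specGame Tr τ).Win (.defC p (∅ : Set Proc)) e' →
      StratD Tr τ (.defS p ∅) e (.stableConj Empty fun x => x.elim)
  | branchConj {p p' : Proc} {α : Act} {Q Qa Q' : Set Proc} {ua ua' : Update}
      {e e1 ea : Energy} {φa : Formula Act τ}
      (us : {q // q ∈ Q} → Update) (es : {q // q ∈ Q} → Energy)
      (ψs : {q // q ∈ Q} → Conjunct Act τ) :
      GMove Tr τ (.defB p α p' Q Qa) ua (.attB p' Q') →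
      GMove Tr τ (.attB p' Q') ua' (.att p' Q') →
      upd e ua = some e1 →
      upd e1 ua' = some ea →
      (specGame Tr τ).Win (.att p' Q') ea →
      StratF Tr τ (.att p' Q') ea φa →
      (∀ qq : {q // q ∈ Q}, GMove Tr τ (.defB p α p' Q Qa) (us qq) (.attC p qq.1)) →
      (∀ qq : {q // q ∈ Q}, upd e (us qq) = some (es qq)) →
      (∀ qq : {q // q ∈ Q}, (specGame Tr τ).Win (.attC p qq.1) (es qq)) →
      (∀ qq : {q // q ∈ Q}, StratC Tr τ (.attC p qq.1) (es qq) (ψs qq)) →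
      StratD Tr τ (.defB p α p' Q Qa) e (.branchConj α φa {q // q ∈ Q} ψs)

/-- Attacker strategy formulas (conjunct sort). -/
inductive StratC (Tr : Proc → Act → Proc → Prop) (τ : Act) :
    GPos Proc Act → Energy → Conjunct Act τ → Prop
  | pos {p q : Proc} {Q' : Set Proc} {u : Update} {e e' : Energy} {χ : DFormula Act τ} :
      GMove Tr τ (.attC p q) u (.attD p Q') →
      upd e u = some e' →
      (specGame Tr τ).Win (.attD p Q') e' →
      StratD Tr τ (.attD p Q') e' χ →
      StratC Tr τ (.attC p q) e (.pos χ)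
  | neg {p q : Proc} {P' : Set Proc} {u : Update} {e e' : Energy} {χ : DFormula Act τ} :
      GMove Tr τ (.attC p q) u (.attD q P') →
      upd e u = some e' →
      (specGame Tr τ).Win (.attD q P') e' →
      StratD Tr τ (.attD q P') e' χ →
      StratC Tr τ (.attC p q) e (.neg χ)
end

end Strat

/-! ### Helper lemmas -/

section Helpers

lemma upd_eq (e : Energy) (u : Update) (h : ∀ k, u k = UpdComp.decr → e k ≠ 0) :
    upd e u = some (fun k =>
      match u k with
      | UpdComp.decr => e k - 1
      | UpdComp.zero => e k
      | UpdComp.minWith D => (insert k D).inf e) := by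
  unfold upd; rw [if_pos h]

lemma upd_mono {e e' e₁ : Energy} {u : Update} (h : upd e u = some e₁) (hle : e ≤ e') :
    ∃ e₁', upd e' u = some e₁' ∧ e₁ ≤ e₁' := by
  unfold upd at h
  split at h
  case isFalse => exact absurd h (by simp)
  case isTrue hc =>
    have hc' : ∀ k, u k = UpdComp.decr → e' k ≠ 0 := by
      intro k hk h0
      exact hc k hk (le_antisymm (h0 ▸ hle k) zero_le)
    refine ⟨_, upd_eq e' u hc', ?_⟩
    obtain rfl : e₁ = _ := (Option.some_inj.mp h).symm
    intro k
    cases hu : u k <;> simp only [hu]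
    · exact tsub_le_tsub_right (hle k) 1
    · exact hle k
    · exact Finset.inf_mono_fun fun i _ => hle i

lemma win_mono {Pos : Type} {G : EGame Pos} {g : Pos} {e f : Energy}
    (hle : e ≤ f) (h : G.Win g e) : G.Win g f := by
  induction h generalizing f with
  | attack hd hm hu _ ih =>
    obtain ⟨e₁', hu', hle'⟩ := upd_mono hu hle
    exact EGame.Win.attack hd hm hu' (ih hle')
  | defend hd hne _ ih =>
    refine EGame.Win.defend hd ?_ ?_
    · intro u g' hm h0
      obtain ⟨e₁, h₁⟩ := Option.ne_none_iff_exists'.mp (hne u g' hm)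
      obtain ⟨e₂, h₂, -⟩ := upd_mono h₁ hle
      rw [h₂] at h0; exact absurd h0 (by simp)
    · intro u g' e₁' hm hu'
      obtain ⟨e₁, h₁⟩ := Option.ne_none_iff_exists'.mp (hne u g' hm)
      obtain ⟨e₂, h₂, hle₂⟩ := upd_mono h₁ hle
      rw [hu'] at h₂
      obtain rfl := Option.some_inj.mp h₂
      exact ih u g' e₁ hm h₁ hle₂

lemma upd_zero (e : Energy) : upd e zeroU = some e := by
  rw [upd_eq e zeroU (by intro k hk; simp [zeroU] at hk)]; rfl

end Helpers

section GameHelpers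

variable {Proc Act : Type} {Tr : Proc → Act → Proc → Prop} {τ : Act}

lemma attack_win {g g' : GPos Proc Act} {u : Update} {e t : Energy}
    (hd : ¬ isDefender g) (hm : GMove Tr τ g u g')
    (hc : ∀ k, u k = UpdComp.decr → e k ≠ 0)
    (ht : t ≤ fun k =>
      match u k with
      | UpdComp.decr => e k - 1
      | UpdComp.zero => e k
      | UpdComp.minWith D => (insert k D).inf e)
    (hw : (specGame Tr τ).Win g' t) : (specGame Tr τ).Win g e :=
  EGame.Win.attack hd hm (upd_eq e u hc) (win_mono ht hw)

lemma attack_zero {g g' : GPos Proc Act} {e : Energy}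
    (hd : ¬ isDefender g) (hm : GMove Tr τ g zeroU g')
    (hw : (specGame Tr τ).Win g' e) : (specGame Tr τ).Win g e :=
  EGame.Win.attack hd hm (upd_zero e) hw

lemma win_star {p p'' : Proc} {Q : Set Proc} {e : Energy}
    (h : Star Tr τ p p'') (hw : (specGame Tr τ).Win (.attD p'' Q) e) :
    (specGame Tr τ).Win (.attD p Q) e := by
  induction h using Relation.ReflTransGen.head_induction_on with
  | refl => exact hw
  | @head a c hstep htail ih =>
    by_cases hac : a = c
    · subst hac; exact ih
    · exact attack_zero (fun h => h) (GMove.procrastination hstep hac) ih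

lemma win_defC_empty (p : Proc) (e : Energy) :
    (specGame Tr τ).Win (.defC p (∅ : Set Proc)) e := by
  refine EGame.Win.defend trivial ?_ ?_
  · intro u g' hm
    cases hm with
    | conjAnswer hq => exact absurd hq (Set.notMem_empty _)
  · intro u g' e' hm
    cases hm with
    | conjAnswer hq => exact absurd hq (Set.notMem_empty _)

end GameHelpers

section EnergyHelpers

lemma enat_le_sub_one {x y : ℕ∞} (h : 1 + x ≤ y) : x ≤ y - 1 :=
  (ENat.addLECancellable_of_ne_top (by simp)).le_tsub_of_add_le_left h

lemma unit_add_ne (i : Fin 8) (x : Energy) : (unitE i + x) i ≠ 0 := by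
  simp [unitE, add_eq_zero]

lemma decU_cond (i : Fin 8) (S : Energy) :
    ∀ k, decU i k = UpdComp.decr → (unitE i + S) k ≠ 0 := by
  intro k hk
  simp only [decU] at hk
  split at hk
  · next h => subst h; exact unit_add_ne _ S
  · simp at hk

lemma decU_le (i : Fin 8) (S : Energy) :
    S ≤ fun k => match decU i k with
      | UpdComp.decr => (unitE i + S) k - 1
      | UpdComp.zero => (unitE i + S) k
      | UpdComp.minWith D => (insert k D).inf (unitE i + S) := by
  intro k
  simp only [decU]
  by_cases hk : k = i
  · subst hk
    simp only [if_pos rfl, unitE, Pi.add_apply, if_pos rfl]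
    exact enat_le_sub_one le_rfl
  · simp [if_neg hk, unitE, hk]

end EnergyHelpers

section GameHelpers2

variable {Proc Act : Type} {Tr : Proc → Act → Proc → Prop} {τ : Act}

lemma win_defC_conj {p : Proc} {Q : Set Proc} {S : Energy}
    (h : ∀ q ∈ Q, (specGame Tr τ).Win (.attC p q) S) :
    (specGame Tr τ).Win (.defC p Q) (unitE 2 + S) := by
  refine EGame.Win.defend trivial ?_ ?_
  · intro u g' hm
    cases hm with
    | conjAnswer hq => rw [upd_eq _ _ (decU_cond 2 S)]; simp
  · intro u g' e' hm hu
    cases hm with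
    | conjAnswer hq =>
      rw [upd_eq _ _ (decU_cond 2 S)] at hu
      obtain rfl := Option.some_inj.mp hu
      exact win_mono (decU_le 2 S) (h _ hq)

end GameHelpers2

section EnergyHelpers2

lemma pos_cond (x : Energy) :
    ∀ k, minU16 k = UpdComp.decr → (x ⊔ onlyAt 5 (x 0)) k ≠ 0 := by
  intro k hk
  simp only [minU16] at hk
  split at hk <;> exact absurd hk (by simp)

lemma pos_le (x : Energy) :
    x ≤ fun k => match minU16 k with
      | UpdComp.decr => (x ⊔ onlyAt 5 (x 0)) k - 1
      | UpdComp.zero => (x ⊔ onlyAt 5 (x 0)) k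
      | UpdComp.minWith D => (insert k D).inf (x ⊔ onlyAt 5 (x 0)) := by
  intro k
  simp only [minU16]
  by_cases hk : k = 0
  · subst hk
    rw [if_pos rfl]
    refine Finset.le_inf ?_
    intro j hj
    simp only [Finset.mem_insert, Finset.mem_singleton] at hj
    rcases hj with rfl | rfl
    · simp only [Pi.sup_apply]; exact le_sup_left
    · simp only [Pi.sup_apply, onlyAt, if_pos rfl]; exact le_sup_right
  · rw [if_neg hk]; simp only [Pi.sup_apply]; exact le_sup_left

lemma neg_cond (x : Energy) :
    ∀ k, minU17dec8 k = UpdComp.decr → ((unitE 7 + x) ⊔ onlyAt 6 (x 0)) k ≠ 0 := by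
  intro k hk
  simp only [minU17dec8] at hk
  split at hk
  · exact absurd hk (by simp)
  split at hk
  · next h => subst h; simp [unitE, onlyAt, add_eq_zero]
  · exact absurd hk (by simp)

lemma neg_le (x : Energy) :
    x ≤ fun k => match minU17dec8 k with
      | UpdComp.decr => ((unitE 7 + x) ⊔ onlyAt 6 (x 0)) k - 1
      | UpdComp.zero => ((unitE 7 + x) ⊔ onlyAt 6 (x 0)) k
      | UpdComp.minWith D => (insert k D).inf ((unitE 7 + x) ⊔ onlyAt 6 (x 0)) := by
  intro k
  simp only [minU17dec8]
  by_cases hk0 : k = 0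
  · subst hk0
    rw [if_pos rfl]
    refine Finset.le_inf ?_
    intro j hj
    simp only [Finset.mem_insert, Finset.mem_singleton] at hj
    rcases hj with rfl | rfl
    · simp [unitE, Pi.sup_apply, Pi.add_apply]
    · simp [unitE, onlyAt, Pi.sup_apply, Pi.add_apply]
  · rw [if_neg hk0]
    by_cases hk7 : k = 7
    · subst hk7
      rw [if_pos rfl]
      refine enat_le_sub_one ?_
      simp [unitE, onlyAt, Pi.sup_apply, Pi.add_apply]
    · rw [if_neg hk7]
      simp [unitE, onlyAt, Pi.sup_apply, Pi.add_apply, hk7]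

lemma br_cond23 (f S : Energy) :
    ∀ k, dec23 k = UpdComp.decr →
      ((unitE 1 + unitE 2) + (((unitE 0 + f) ⊔ onlyAt 5 (1 + f 0)) ⊔ S)) k ≠ 0 := by
  intro k hk
  simp only [dec23] at hk
  split at hk
  · next h => rcases h with rfl | rfl <;> simp [unitE, add_eq_zero]
  · exact absurd hk (by simp)

lemma br_condObs (f S : Energy) :
    ∀ k, minU16dec23 k = UpdComp.decr →
      ((unitE 1 + unitE 2) + (((unitE 0 + f) ⊔ onlyAt 5 (1 + f 0)) ⊔ S)) k ≠ 0 := by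
  intro k hk
  simp only [minU16dec23] at hk
  split at hk
  · exact absurd hk (by simp)
  split at hk
  · next h => rcases h with rfl | rfl <;> simp [unitE, add_eq_zero]
  · exact absurd hk (by simp)

lemma br_le23 (f S : Energy) :
    (((unitE 0 + f) ⊔ onlyAt 5 (1 + f 0)) ⊔ S) ≤ fun k =>
      match dec23 k with
      | UpdComp.decr => ((unitE 1 + unitE 2) + (((unitE 0 + f) ⊔ onlyAt 5 (1 + f 0)) ⊔ S)) k - 1
      | UpdComp.zero => ((unitE 1 + unitE 2) + (((unitE 0 + f) ⊔ onlyAt 5 (1 + f 0)) ⊔ S)) k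
      | UpdComp.minWith D =>
          (insert k D).inf ((unitE 1 + unitE 2) + (((unitE 0 + f) ⊔ onlyAt 5 (1 + f 0)) ⊔ S)) := by
  set E := ((unitE 0 + f) ⊔ onlyAt 5 (1 + f 0)) ⊔ S with hE
  intro k
  simp only [dec23]
  by_cases h : k = 1 ∨ k = 2
  · rw [if_pos h]
    refine enat_le_sub_one ?_
    rcases h with rfl | rfl <;> simp [unitE, Pi.add_apply]
  · rw [if_neg h]
    push_neg at h
    simp [unitE, Pi.add_apply, h.1, h.2]

lemma br_leObs (f S : Energy) :
    (unitE 0 + f) ≤ fun k =>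
      match minU16dec23 k with
      | UpdComp.decr => ((unitE 1 + unitE 2) + (((unitE 0 + f) ⊔ onlyAt 5 (1 + f 0)) ⊔ S)) k - 1
      | UpdComp.zero => ((unitE 1 + unitE 2) + (((unitE 0 + f) ⊔ onlyAt 5 (1 + f 0)) ⊔ S)) k
      | UpdComp.minWith D =>
          (insert k D).inf ((unitE 1 + unitE 2) + (((unitE 0 + f) ⊔ onlyAt 5 (1 + f 0)) ⊔ S)) := by
  have hEf : (unitE 0 + f) ≤ ((unitE 0 + f) ⊔ onlyAt 5 (1 + f 0)) ⊔ S :=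
    le_sup_left.trans le_sup_left
  have h5 : onlyAt 5 (1 + f 0) ≤ ((unitE 0 + f) ⊔ onlyAt 5 (1 + f 0)) ⊔ S :=
    le_sup_right.trans le_sup_left
  intro k
  simp only [minU16dec23]
  by_cases h0 : k = 0
  · subst h0
    rw [if_pos rfl]
    refine Finset.le_inf ?_
    intro j hj
    simp only [Finset.mem_insert, Finset.mem_singleton] at hj
    rcases hj with rfl | rfl
    · simpa [unitE, Pi.add_apply] using hEf 0
    · simpa [unitE, onlyAt, Pi.add_apply] using h5 5
  · rw [if_neg h0]
    by_cases h12 : k = 1 ∨ k = 2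
    · rw [if_pos h12]
      refine enat_le_sub_one ?_
      rcases h12 with rfl | rfl <;>
        · simp only [unitE, Pi.add_apply]
          simp only [show ¬((1:Fin 8) = 0) from by decide, show ¬((2:Fin 8) = 0) from by decide,
            if_false, if_true, if_pos rfl]
          first
          | (simpa [unitE] using add_le_add_left (by simpa [unitE] using hEf 1) (1 : ℕ∞))
          | (simpa [unitE] using add_le_add_left (by simpa [unitE] using hEf 2) (1 : ℕ∞))
    · rw [if_neg h12]
      push_neg at h12
      simpa [unitE, Pi.add_apply, h0, h12.1, h12.2] using hEf k

end EnergyHelpers2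

section Main

variable {Proc Act : Type} {Tr : Proc → Act → Proc → Prop} {τ : Act}

lemma winB_aux (α : Act) (φ' : Formula Act τ) (I : Type) (ps : I → Conjunct Act τ)
    (p p' : Proc) (Q Qa : Set Proc)
    (hps : ∀ i, SatC Tr τ p (ps i))
    (hQ : ∀ q ∈ Q, ¬ SatD Tr τ q (.branchConj α φ' I ps))
    (hp' : Sat Tr τ p' φ')
    (hQa : Qa = {q ∈ Q | ¬ ∃ q', OptStep Tr τ q α q' ∧ Sat Tr τ q' φ'})
    (IHf : ∀ r (R : Set Proc), Sat Tr τ r φ' → (∀ s ∈ R, ¬ Sat Tr τ s φ') →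
      (specGame Tr τ).Win (.att r R) (exprF φ'))
    (IHc : ∀ i r s, SatC Tr τ r (ps i) → ¬ SatC Tr τ s (ps i) →
      (specGame Tr τ).Win (.attC r s) (exprC (ps i))) :
    (specGame Tr τ).Win (.defB p α p' (Q \ Qa) Qa)
      (exprE (.branchConj α φ' I ps)) := by
  subst hQa
  simp only [exprE]
  have hfail : ∀ q ∈ Q \ {q ∈ Q | ¬ ∃ q', OptStep Tr τ q α q' ∧ Sat Tr τ q' φ'},
      ∃ i, ¬ SatC Tr τ q (ps i) := by
    intro q hq
    have hex : ∃ q', OptStep Tr τ q α q' ∧ Sat Tr τ q' φ' := by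
      by_contra hn
      exact hq.2 ⟨hq.1, hn⟩
    have h := hQ q hq.1
    simp only [SatD] at h
    exact not_forall.mp (not_and.mp h hex)
  refine EGame.Win.defend trivial ?_ ?_
  · intro u g' hm
    cases hm with
    | branchAnswer hq =>
      rw [upd_eq _ _ (br_cond23 (exprF φ') (⨆ i, exprC (ps i)))]; simp
    | branchObservation hQ' =>
      rw [upd_eq _ _ (br_condObs (exprF φ') (⨆ i, exprC (ps i)))]; simp
  · intro u g' e' hm hu
    cases hm with
    | @branchAnswer _ _ q _ _ _ hq =>
      rw [upd_eq _ _ (br_cond23 (exprF φ') (⨆ i, exprC (ps i)))] at hu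
      obtain rfl := Option.some_inj.mp hu
      obtain ⟨i, hi⟩ := hfail q hq
      refine win_mono ?_ (IHc i p q (hps i) hi)
      exact ((le_iSup (fun i => exprC (ps i)) i).trans le_sup_right).trans
        (br_le23 (exprF φ') (⨆ i, exprC (ps i)))
    | @branchObservation _ _ _ _ _ Q' hQ' =>
      rw [upd_eq _ _ (br_condObs (exprF φ') (⨆ i, exprC (ps i)))] at hu
      obtain rfl := Option.some_inj.mp hu
      refine win_mono (br_leObs (exprF φ') (⨆ i, exprC (ps i))) ?_
      refine attack_win (fun h => h) GMove.branchAccounting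
        (decU_cond 0 (exprF φ')) (decU_le 0 (exprF φ')) ?_
      refine IHf p' Q' hp' ?_
      intro s hs hsat
      rw [hQ'] at hs
      obtain ⟨q, hqa, hstep⟩ := hs
      exact hqa.2 ⟨s, hstep, hsat⟩

mutual

theorem winF (φ : Formula Act τ) (p : Proc) (Q : Set Proc)
    (hp : Sat Tr τ p φ) (hQ : ∀ q ∈ Q, ¬ Sat Tr τ q φ) :
    (specGame Tr τ).Win (.att p Q) (exprF φ) := by
  cases φ with
  | delayed χ =>
    simp only [Sat] at hp
    obtain ⟨p'', hst, hsat⟩ := hp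
    simp only [exprF]
    refine attack_zero (fun h => h)
      (GMove.delay (Q' := {q' | ∃ q ∈ Q, Star Tr τ q q'}) rfl) ?_
    refine win_star hst (winD χ p'' _ hsat ?_)
    rintro q' ⟨q, hq, hst0⟩ hsat'
    exact hQ q hq (by simp only [Sat]; exact ⟨q', hst0, hsat'⟩)
  | conj I ps =>
    simp only [Sat] at hp
    rcases eq_or_ne Q ∅ with rfl | hne
    · exact attack_zero (fun h => h) GMove.finishing (win_defC_empty p _)
    · obtain ⟨q0, hq0⟩ := Set.nonempty_iff_ne_empty.mpr hne
      have hI : ∀ q ∈ Q, ∃ i, ¬ SatC Tr τ q (ps i) := by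
        intro q hq
        have h := hQ q hq
        simp only [Sat] at h
        exact not_forall.mp h
      have hNe : Nonempty I := ⟨(hI q0 hq0).choose⟩
      simp only [exprF]
      rw [iSup_pos hNe, add_assoc]
      refine attack_win (fun h => h) (GMove.immediateConj hne)
        (decU_cond 4 _) (decU_le 4 _) ?_
      refine win_defC_conj ?_
      intro q hq
      obtain ⟨i, hi⟩ := hI q hq
      exact win_mono (le_iSup (fun i => exprC (ps i)) i) (winC (ps i) p q (hp i) hi)

theorem winD (χ : DFormula Act τ) (p : Proc) (Q : Set Proc)
    (hp : SatD Tr τ p χ) (hQ : ∀ q ∈ Q, ¬ SatD Tr τ q χ) :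
    (specGame Tr τ).Win (.attD p Q) (exprE χ) := by
  cases χ with
  | obs a ha φ =>
    simp only [SatD] at hp
    obtain ⟨p', hstep, hsat⟩ := hp
    simp only [exprE]
    refine attack_win (fun h => h)
      (GMove.observation (Q' := {q' | ∃ q ∈ Q, Tr q a q'}) hstep ha rfl)
      (decU_cond 0 _) (decU_le 0 _) ?_
    refine winF φ p' _ hsat ?_
    rintro q' ⟨q, hq, hstep'⟩ hsat'
    exact hQ q hq (by simp only [SatD]; exact ⟨q', hstep', hsat'⟩)
  | conj I ps =>
    simp only [SatD] at hp
    refine attack_zero (fun h => h) GMove.lateConj ?_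
    rcases eq_or_ne Q ∅ with rfl | hne
    · exact win_defC_empty p _
    · obtain ⟨q0, hq0⟩ := Set.nonempty_iff_ne_empty.mpr hne
      have hI : ∀ q ∈ Q, ∃ i, ¬ SatC Tr τ q (ps i) := by
        intro q hq
        have h := hQ q hq
        simp only [SatD] at h
        exact not_forall.mp h
      have hNe : Nonempty I := ⟨(hI q0 hq0).choose⟩
      simp only [exprE]
      rw [iSup_pos hNe]
      refine win_defC_conj ?_
      intro q hq
      obtain ⟨i, hi⟩ := hI q hq
      exact win_mono (le_iSup (fun i => exprC (ps i)) i) (winC (ps i) p q (hp i) hi)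
  | stableConj I ps =>
    simp only [SatD] at hp
    obtain ⟨hstab, hsat⟩ := hp
    refine attack_zero (fun h => h) (GMove.stableConj hstab) ?_
    simp only [exprE]
    have key : ∀ R : Set Proc, (∀ q ∈ R, ∃ i, ¬ SatC Tr τ q (ps i)) →
        (specGame Tr τ).Win (.defS p R) (unitE 3 + ⨆ i, exprC (ps i)) := by
      intro R hR
      refine EGame.Win.defend trivial ?_ ?_
      · intro u g' hm
        cases hm with
        | conjStableAnswer hq => rw [upd_eq _ _ (decU_cond 3 _)]; simp
        | stableFinishing => rw [upd_eq _ _ (decU_cond 3 _)]; simp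
      · intro u g' e' hm hu
        cases hm with
        | @conjStableAnswer _ q _ hq =>
          rw [upd_eq _ _ (decU_cond 3 _)] at hu
          obtain rfl := Option.some_inj.mp hu
          obtain ⟨i, hi⟩ := hR q hq
          exact win_mono ((le_iSup (fun i => exprC (ps i)) i).trans (decU_le 3 _))
            (winC (ps i) p q (hsat i) hi)
        | stableFinishing => exact win_defC_empty p _
    refine key _ ?_
    intro q hq
    have h := hQ q hq.1
    simp only [SatD] at h
    exact not_forall.mp (not_and.mp h hq.2)
  | branchConj α φ' I ps =>
    simp only [SatD] at hp
    obtain ⟨⟨p', hstep, hsat⟩, hps⟩ := hp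
    refine attack_zero (fun h => h)
      (GMove.branchConj (Qa := {q ∈ Q | ¬ ∃ q', OptStep Tr τ q α q' ∧ Sat Tr τ q' φ'})
        hstep (Set.sep_subset _ _)) ?_
    exact winB_aux α φ' I ps p p' Q _ hps hQ hsat rfl
      (fun r R h1 h2 => winF φ' r R h1 h2)
      (fun i r s h1 h2 => winC (ps i) r s h1 h2)

theorem winC (ψ : Conjunct Act τ) (p q : Proc)
    (h1 : SatC Tr τ p ψ) (h2 : ¬ SatC Tr τ q ψ) :
    (specGame Tr τ).Win (.attC p q) (exprC ψ) := by
  cases ψ with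
  | pos χ =>
    simp only [SatC] at h1 h2
    obtain ⟨p'', hst, hsat⟩ := h1
    simp only [exprC]
    refine attack_win (fun h => h)
      (GMove.posConjunct (Q := {q' | ∃ q0 ∈ ({q} : Set Proc), Star Tr τ q0 q'}) rfl)
      (pos_cond _) (pos_le _) ?_
    refine win_star hst (winD χ p'' _ hsat ?_)
    rintro q' ⟨q0, hq0, hst0⟩ hsat'
    rw [Set.mem_singleton_iff] at hq0
    subst hq0
    exact h2 ⟨q', hst0, hsat'⟩
  | neg χ =>
    simp only [SatC] at h1 h2
    rw [not_not] at h2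
    obtain ⟨q'', hst, hsat⟩ := h2
    have hpq : p ≠ q := by rintro rfl; exact h1 ⟨q'', hst, hsat⟩
    simp only [exprC]
    refine attack_win (fun h => h)
      (GMove.negConjunct (Q := {q' | ∃ q0 ∈ ({p} : Set Proc), Star Tr τ q0 q'}) rfl hpq)
      (neg_cond _) (neg_le _) ?_
    refine win_star hst (winD χ q'' _ hsat ?_)
    rintro p1 ⟨p0, hp0, hst0⟩ hsat'
    rw [Set.mem_singleton_iff] at hp0
    subst hp0
    exact h1 ⟨p1, hst0, hsat'⟩

end

end Main


/-- if a branching conjunction `⋀({(α)φ'} ∪ Ψ)` distinguishes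
`p` from `Q`, then for any `p →(α) p'` with `p' ∈ ⟦φ'⟧` and
`Qa = {q ∈ Q | q ∉ ⟦(α)φ'⟧^∧}`, its `expr^ε` price is attacker-winning at
`(p,α,p',Q∖Qa,Qa)^η_d`. -/
theorem distinction_price_in_win_branching_conjunction {Proc Act : Type}
    (Tr : Proc → Act → Proc → Prop) (τ : Act)
    (α : Act) (φ' : Formula Act τ) (I : Type) (ps : I → Conjunct Act τ)
    (p p' : Proc) (Q Qa : Set Proc)
    (h : DistinguishesD Tr τ (DFormula.branchConj α φ' I ps) p Q)
    (hstep : OptStep Tr τ p α p') (hp' : Sat Tr τ p' φ')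
    (hQa : Qa = {q ∈ Q | ¬ ∃ q', OptStep Tr τ q α q' ∧ Sat Tr τ q' φ'}) :
    (specGame Tr τ).Win (.defB p α p' (Q \ Qa) Qa)
      (exprE (DFormula.branchConj α φ' I ps)) := by
  obtain ⟨hp, hQ⟩ := h
  simp only [SatD] at hp
  exact winB_aux α φ' I ps p p' Q Qa hp.2 hQ hp' hQa
    (fun r R h1 h2 => winF φ' r R h1 h2)
    (fun i r s h1 h2 => winC (ps i) r s h1 h2)

end Spectroscopy
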